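/- Let A be a finite alphabet, H a finite group, and μ : A^* → H a surjective monoid morphism. For every integer k > 0 there exists an integer n_k such that the following holds: for every finite A-labeled DAG G = (V, ≤, ℓ) containing an n_k-rich antichain and for all elements g₁, …, g_k of H, if there exists a word w over A with μ(w) = g₁ ⋯ g_k and such that, for every letter a ∈ A, |w|_a equals the number of vertices of V labeled a, then there is a topological sort σ of V and a decomposition of σ as a concatenation σ = σ₁ σ₂ ⋯ σ_k such that μ(wᵢ) = gᵢ for each 1 ≤ i ≤ k, where wᵢ is the word achieved by σᵢ. -/

import Mathlib

namespace CTS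

section Words
variable {A : Type} [Fintype A] [DecidableEq A] {H : Type} [Group H] [Fintype H]

/-- canonical word with letter counts `c` -/
noncomputable def canon (c : A → ℕ) : List A :=
  ((Finset.univ.toList : List A).map fun a => List.replicate (c a) a).flatten

/-- word power -/
def wpow (u : List A) (n : ℕ) : List A := (List.replicate n u).flatten

theorem mu_wpow (μ : List A → H) (hone : μ [] = 1)
    (hmul : ∀ u v : List A, μ (u ++ v) = μ u * μ v) (u : List A) (n : ℕ) :
    μ (wpow u n) = μ u ^ n := by
  induction n with
  | zero => simp [wpow, hone]
  | succ n ih =>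
      rw [wpow, List.replicate_succ, List.flatten_cons, hmul]
      rw [wpow] at ih
      rw [ih, pow_succ']

theorem count_wpow (a : A) (u : List A) (n : ℕ) : (wpow u n).count a = n * u.count a := by
  induction n with
  | zero => simp [wpow]
  | succ n ih =>
      rw [wpow, List.replicate_succ, List.flatten_cons, List.count_append]
      rw [wpow] at ih
      rw [ih]; ring

theorem count_canon (c : A → ℕ) (a : A) : (canon c).count a = c a := by
  rw [canon, List.count_flatten, List.map_map]
  have hnd := Finset.nodup_toList (Finset.univ : Finset A)
  have hmem : a ∈ (Finset.univ : Finset A).toList := by simp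
  revert hnd hmem
  induction (Finset.univ : Finset A).toList with
  | nil => intro _ h; simp at h
  | cons b l ih =>
      intro hnd hmem
      rw [List.map_cons, List.sum_cons]
      rcases List.mem_cons.1 hmem with rfl | hal
      · have hnotl : a ∉ l := (List.nodup_cons.1 hnd).1
        have hz : ((l.map ((List.count a) ∘ fun x => List.replicate (c x) x))).sum = 0 := by
          apply List.sum_eq_zero
          intro x hx
          simp only [List.mem_map] at hx
          obtain ⟨y, hy, rfl⟩ := hx
          have : a ≠ y := fun h => hnotl (h ▸ hy)
          simp only [Function.comp_apply, List.count_replicate]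
          rw [if_neg (by simpa using this.symm)]
        simp [hz, List.count_replicate]
      · have hab : a ≠ b := by
          rintro rfl
          rw [List.nodup_cons] at hnd; exact hnd.1 hal
        rw [ih (List.nodup_cons.1 hnd).2 hal, Function.comp_apply, List.count_replicate,
          if_neg (by simpa using hab.symm)]
        simp

theorem mu_flatten (μ : List A → H) (hone : μ [] = 1)
    (hmul : ∀ u v : List A, μ (u ++ v) = μ u * μ v) (L : List (List A)) :
    μ L.flatten = (L.map μ).prod := by
  induction L with
  | nil => simpa using hone
  | cons x L ih => rw [List.flatten_cons, hmul, ih, List.map_cons, List.prod_cons]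

theorem mu_replicate (μ : List A → H) (hone : μ [] = 1)
    (hmul : ∀ u v : List A, μ (u ++ v) = μ u * μ v) (a : A) (n : ℕ) :
    μ (List.replicate n a) = μ [a] ^ n := by
  induction n with
  | zero => simpa using hone
  | succ n ih =>
      rw [List.replicate_succ, show (a :: List.replicate n a) = [a] ++ List.replicate n a from rfl,
        hmul, ih, pow_succ']

theorem mu_canon (μ : List A → H) (hone : μ [] = 1)
    (hmul : ∀ u v : List A, μ (u ++ v) = μ u * μ v) (c : A → ℕ) :
    μ (canon c) = ((Finset.univ.toList : List A).map fun a => μ [a] ^ c a).prod := by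
  rw [canon, mu_flatten μ hone hmul, List.map_map]
  congr 1
  apply List.map_congr_left
  intro a _
  exact mu_replicate μ hone hmul a (c a)

theorem mu_canon_mod (μ : List A → H) (hone : μ [] = 1)
    (hmul : ∀ u v : List A, μ (u ++ v) = μ u * μ v) (c c' : A → ℕ)
    (h : ∀ a, c a ≡ c' a [MOD Fintype.card H]) : μ (canon c) = μ (canon c') := by
  rw [mu_canon μ hone hmul, mu_canon μ hone hmul]
  congr 1
  apply List.map_congr_left
  intro a _
  rw [pow_eq_pow_iff_modEq]
  exact (h a).of_dvd orderOf_dvd_card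

theorem pow_card_sub_one (x : H) : x ^ (Fintype.card H - 1) = x⁻¹ := by
  apply eq_inv_of_mul_eq_one_left
  rw [← pow_succ, show Fintype.card H - 1 + 1 = Fintype.card H from
    Nat.succ_pred_eq_of_pos Fintype.card_pos, pow_card_eq_one]

variable (μ : List A → H) (hone : μ [] = 1)
  (hmul : ∀ u v : List A, μ (u ++ v) = μ u * μ v)

/-- the subgroup of elements achieved by words whose letter counts are all divisible
by the order of the group -/
def SG : Subgroup H where
  carrier := {h | ∃ u : List A, μ u = h ∧ ∀ a : A, Fintype.card H ∣ u.count a}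
  one_mem' := ⟨[], hone, by simp⟩
  mul_mem' := by
    rintro x y ⟨u, rfl, hu⟩ ⟨v, rfl, hv⟩
    exact ⟨u ++ v, (hmul u v), fun a => by
      rw [List.count_append]; exact (hu a).add (hv a)⟩
  inv_mem' := by
    rintro x ⟨u, rfl, hu⟩
    refine ⟨wpow u (Fintype.card H - 1), ?_, fun a => ?_⟩
    · rw [mu_wpow μ hone hmul, pow_card_sub_one]
    · rw [count_wpow]; exact ((hu a).mul_left _)

theorem mem_SG_word (u : List A) (h : ∀ a : A, Fintype.card H ∣ u.count a) :
    μ u ∈ SG μ hone hmul := ⟨u, rfl, h⟩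

theorem card_mul_arith (x y : ℕ) :
    x + (y + ((Fintype.card H - 1) * x + (Fintype.card H - 1) * y)) =
      Fintype.card H * x + Fintype.card H * y := by
  have h : Fintype.card H = (Fintype.card H - 1) + 1 :=
    (Nat.succ_pred_eq_of_pos Fintype.card_pos).symm
  rw [h]; simp only [Nat.add_sub_cancel]; ring

theorem comm_mem_SG (hsurj : Function.Surjective μ) (x y : H) :
    x * y * x⁻¹ * y⁻¹ ∈ SG μ hone hmul := by
  obtain ⟨u, rfl⟩ := hsurj x
  obtain ⟨v, rfl⟩ := hsurj y
  refine ⟨u ++ (v ++ (wpow u (Fintype.card H - 1) ++ wpow v (Fintype.card H - 1))), ?_, ?_⟩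
  · rw [hmul, hmul, hmul, mu_wpow μ hone hmul, mu_wpow μ hone hmul,
      pow_card_sub_one, pow_card_sub_one]
    group
  · intro a
    simp only [List.count_append, count_wpow]
    rw [card_mul_arith]
    exact Dvd.dvd.add (Dvd.intro _ rfl) (Dvd.intro _ rfl)

theorem SG_normal (hsurj : Function.Surjective μ) : (SG μ hone hmul).Normal := by
  constructor
  rintro n ⟨u, rfl, hu⟩ g
  obtain ⟨v, rfl⟩ := hsurj g
  refine ⟨v ++ (u ++ wpow v (Fintype.card H - 1)), ?_, fun a => ?_⟩
  · rw [hmul, hmul, mu_wpow μ hone hmul, pow_card_sub_one]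
    group
  · simp only [List.count_append, count_wpow]
    have harith : v.count a + (u.count a + (Fintype.card H - 1) * v.count a) =
        Fintype.card H * v.count a + u.count a := by
      have h : Fintype.card H = (Fintype.card H - 1) + 1 :=
        (Nat.succ_pred_eq_of_pos Fintype.card_pos).symm
      rw [h]; simp only [Nat.add_sub_cancel]; ring
    rw [harith]
    exact Dvd.dvd.add (Dvd.intro _ rfl) (hu a)


end Words

end CTS
namespace CTS
section Quot
variable {A : Type} [Fintype A] [DecidableEq A] {H : Type} [Group H] [Fintype H]
variable (μ : List A → H) (hone : μ [] = 1)
  (hmul : ∀ u v : List A, μ (u ++ v) = μ u * μ v)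
variable [hN : (SG μ hone hmul).Normal]

theorem coe_comm (hsurj : Function.Surjective μ) (x y : H) :
    ((x * y : H) : H ⧸ SG μ hone hmul) = ((y * x : H) : H ⧸ SG μ hone hmul) := by
  rw [QuotientGroup.eq]
  have := comm_mem_SG μ hone hmul hsurj y⁻¹ x⁻¹
  simpa [mul_assoc] using this

theorem quot_comm (hsurj : Function.Surjective μ) (q r : H ⧸ SG μ hone hmul) :
    q * r = r * q := by
  obtain ⟨x, rfl⟩ := QuotientGroup.mk_surjective q
  obtain ⟨y, rfl⟩ := QuotientGroup.mk_surjective r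
  rw [← QuotientGroup.mk_mul, ← QuotientGroup.mk_mul]
  exact coe_comm μ hone hmul hsurj x y

theorem pi_perm (hsurj : Function.Surjective μ) {w w' : List A} (hp : w.Perm w') :
    ((μ w : H) : H ⧸ SG μ hone hmul) = ((μ w' : H) : H ⧸ SG μ hone hmul) := by
  induction hp with
  | nil => rfl
  | cons x h ih =>
      rename_i l₁ l₂
      have e1 : μ (x :: l₁) = μ [x] * μ l₁ := hmul [x] l₁
      have e2 : μ (x :: l₂) = μ [x] * μ l₂ := hmul [x] l₂
      rw [e1, e2, QuotientGroup.mk_mul, QuotientGroup.mk_mul, ih]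
  | swap x y l =>
      have e1 : μ (y :: x :: l) = μ [y] * μ [x] * μ l := by
        rw [show (y :: x :: l) = [y] ++ ([x] ++ l) from rfl, hmul, hmul, mul_assoc]
      have e2 : μ (x :: y :: l) = μ [x] * μ [y] * μ l := by
        rw [show (x :: y :: l) = [x] ++ ([y] ++ l) from rfl, hmul, hmul, mul_assoc]
      rw [e1, e2, QuotientGroup.mk_mul, QuotientGroup.mk_mul, QuotientGroup.mk_mul,
        QuotientGroup.mk_mul]
      congr 1
      rw [← QuotientGroup.mk_mul, ← QuotientGroup.mk_mul]
      exact coe_comm μ hone hmul hsurj (μ [y]) (μ [x])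
  | trans _ _ ih1 ih2 => rw [ih1, ih2]

theorem pi_count (hsurj : Function.Surjective μ) {w w' : List A}
    (h : ∀ a, w.count a = w'.count a) :
    ((μ w : H) : H ⧸ SG μ hone hmul) = ((μ w' : H) : H ⧸ SG μ hone hmul) :=
  pi_perm μ hone hmul hsurj (List.perm_iff_count.2 h)

theorem pi_canon_add (hsurj : Function.Surjective μ) (c d : A → ℕ) :
    ((μ (canon (fun a => c a + d a)) : H) : H ⧸ SG μ hone hmul) =
      ((μ (canon c) : H) : H ⧸ SG μ hone hmul) * ((μ (canon d) : H) : H ⧸ SG μ hone hmul) := by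
  have h1 : ((μ (canon (fun a => c a + d a)) : H) : H ⧸ SG μ hone hmul)
      = ((μ (canon c ++ canon d) : H) : H ⧸ SG μ hone hmul) := by
    apply pi_count μ hone hmul hsurj
    intro a
    rw [count_canon, List.count_append, count_canon, count_canon]
  rw [h1, hmul, QuotientGroup.mk_mul]

theorem pi_canon_sum (hsurj : Function.Surjective μ) (cs : List (A → ℕ)) :
    ((μ (canon (fun a => (cs.map (fun ci => ci a)).sum)) : H) : H ⧸ SG μ hone hmul) =
      (cs.map (fun ci => ((μ (canon ci) : H) : H ⧸ SG μ hone hmul))).prod := by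
  induction cs with
  | nil =>
      have h0 : ((μ (canon (fun a => (List.map (fun ci => ci a)
          ([] : List (A → ℕ))).sum)) : H) : H ⧸ SG μ hone hmul)
          = ((μ ([] : List A) : H) : H ⧸ SG μ hone hmul) := by
        apply pi_count μ hone hmul hsurj
        intro a; rw [count_canon]; simp
      rw [h0, hone]
      simp
  | cons c cs ih =>
      have e : (fun a => (List.map (fun ci => ci a) (c :: cs)).sum)
          = fun a => c a + (List.map (fun ci => ci a) cs).sum := by funext a; simp
      rw [e, pi_canon_add μ hone hmul hsurj, ih, List.map_cons, List.prod_cons]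

theorem class_real (hsurj : Function.Surjective μ) (h : H) :
    ∃ c : A → ℕ, (∀ a, c a < Fintype.card H) ∧
    ((μ (canon c) : H) : H ⧸ SG μ hone hmul) = ((h : H) : H ⧸ SG μ hone hmul) := by
  obtain ⟨u, rfl⟩ := hsurj h
  refine ⟨fun a => u.count a % Fintype.card H, fun a => Nat.mod_lt _ Fintype.card_pos, ?_⟩
  have h1 : μ (canon (fun a => u.count a % Fintype.card H)) = μ (canon (fun a => u.count a)) := by
    apply mu_canon_mod μ hone hmul
    intro a
    exact (Nat.mod_modEq _ _)
  rw [h1]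
  apply pi_count μ hone hmul hsurj
  intro a; rw [count_canon]

theorem single_target : ∃ N0 : ℕ, ∀ (c : A → ℕ) (h : H), (∀ a, N0 ≤ c a) →
    (((μ (canon c) : H) : H ⧸ SG μ hone hmul) = ((h : H) : H ⧸ SG μ hone hmul)) →
    ∃ u : List A, μ u = h ∧ ∀ a, u.count a = c a := by
  classical
  set rep : H → List A := fun s =>
    if hs : s ∈ SG μ hone hmul then
      (Exists.choose (show ∃ u : List A, μ u = s ∧ ∀ a : A, Fintype.card H ∣ u.count a from hs))
    else [] with hrep
  refine ⟨(Finset.univ : Finset (H × A)).sup (fun p => (rep p.1).count p.2), ?_⟩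
  intro c h hc hclass
  set p := μ (canon c) with hp
  have hmem : p⁻¹ * h ∈ SG μ hone hmul := QuotientGroup.eq.1 hclass
  set v := rep (p⁻¹ * h) with hv
  have hvspec : μ v = p⁻¹ * h ∧ ∀ a : A, Fintype.card H ∣ v.count a := by
    rw [hv, hrep]; simp only [dif_pos hmem]
    exact (Exists.choose_spec (show ∃ u : List A, μ u = p⁻¹*h ∧ ∀ a : A,
      Fintype.card H ∣ u.count a from hmem))
  have hvle : ∀ a, v.count a ≤ c a := by
    intro a
    refine le_trans ?_ (hc a)
    exact Finset.le_sup (f := fun p : H × A => (rep p.1).count p.2)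
      (Finset.mem_univ ((p⁻¹*h), a))
  refine ⟨canon (fun a => c a - v.count a) ++ v, ?_, ?_⟩
  · rw [hmul]
    have he : μ (canon (fun a => c a - v.count a)) = μ (canon c) := by
      apply mu_canon_mod μ hone hmul
      intro a
      rw [(Nat.modEq_iff_dvd' (Nat.sub_le _ _))]
      rw [Nat.sub_sub_self (hvle a)]
      exact (hvspec.2 a)
    rw [he, hvspec.1, ← hp]
    group
  · intro a
    rw [List.count_append, count_canon]
    have := hvle a
    omega
end Quot
end CTS
namespace CTS
section Lists
variable {A : Type} [DecidableEq A]

theorem order_vertices {V : Type} [DecidableEq V] (ℓ : V → A) :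
    ∀ (u : List A) (F : Finset V), (∀ a, u.count a = (F.filter fun v => ℓ v = a).card) →
    ∃ l : List V, l.Nodup ∧ l.toFinset = F ∧ l.map ℓ = u := by
  intro u
  induction u with
  | nil =>
      intro F hF
      have hFe : F = ∅ := by
        by_contra hne
        obtain ⟨v, hv⟩ := Finset.nonempty_iff_ne_empty.2 hne
        have h1 := hF (ℓ v)
        simp only [List.count_nil] at h1
        have hmem : v ∈ F.filter fun x => ℓ x = ℓ v := Finset.mem_filter.2 ⟨hv, rfl⟩
        exact (Finset.card_ne_zero_of_mem hmem) h1.symm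
      exact ⟨[], List.nodup_nil, by simp [hFe], rfl⟩
  | cons x u ih =>
      intro F hF
      have hpos : 0 < (F.filter fun v => ℓ v = x).card := by
        rw [← hF x]
        simp [List.count_cons]
      obtain ⟨v, hv⟩ := Finset.card_pos.1 hpos
      have hvF : v ∈ F := (Finset.mem_filter.1 hv).1
      have hvx : ℓ v = x := (Finset.mem_filter.1 hv).2
      obtain ⟨l, hnd, hfs, hmap⟩ := ih (F.erase v) (by
        intro a
        rw [Finset.filter_erase]
        by_cases hax : a = x
        · subst hax
          rw [Finset.card_erase_of_mem (Finset.mem_filter.2 ⟨hvF, hvx⟩)]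
          have := hF a
          rw [List.count_cons_self] at this
          omega
        · rw [Finset.erase_eq_of_notMem (by
            intro hmem
            exact hax ((Finset.mem_filter.1 hmem).2 ▸ hvx ▸ rfl))]
          have := hF a
          rw [List.count_cons, if_neg (by simpa using Ne.symm hax)] at this
          omega)
      refine ⟨v :: l, ?_, ?_, ?_⟩
      · rw [List.nodup_cons]
        refine ⟨fun hmem => ?_, hnd⟩
        have : v ∈ l.toFinset := List.mem_toFinset.2 hmem
        rw [hfs] at this
        exact (Finset.notMem_erase v F) this
      · rw [List.toFinset_cons, hfs, Finset.insert_erase hvF]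
      · rw [List.map_cons, hmap, hvx]

theorem split_list {V : Type} (ℓ : V → A) :
    ∀ (ws : List (List A)) (L : List V), L.map ℓ = ws.flatten →
    ∃ Ls : List (List V), Ls.flatten = L ∧ Ls.map (fun l => l.map ℓ) = ws := by
  intro ws
  induction ws with
  | nil =>
      intro L hL
      simp only [List.flatten_nil, List.map_eq_nil_iff] at hL
      exact ⟨[], by simp [hL], rfl⟩
  | cons w ws ih =>
      intro L hL
      rw [List.flatten_cons] at hL
      have hlen : w.length ≤ L.length := by
        have := congrArg List.length hL
        simp only [List.length_map, List.length_append] at this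
        omega
      have htake : (L.take w.length).map ℓ = w := by
        rw [List.map_take, hL, List.take_left]
      have hdrop : (L.drop w.length).map ℓ = ws.flatten := by
        rw [List.map_drop, hL, List.drop_left]
      obtain ⟨Ls, hfl, hmp⟩ := ih (L.drop w.length) hdrop
      refine ⟨L.take w.length :: Ls, ?_, ?_⟩
      · rw [List.flatten_cons, hfl, List.take_append_drop]
      · rw [List.map_cons, htake, hmp]

end Lists
end CTS
namespace CTS
section Lists2
variable {A : Type} [DecidableEq A]

theorem count_map_label {V : Type} [DecidableEq V] (ℓ : V → A) (l : List V) (hl : l.Nodup)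
    (a : A) : (l.map ℓ).count a = (l.toFinset.filter fun v => ℓ v = a).card := by
  induction l with
  | nil => simp
  | cons v l ih =>
      rw [List.nodup_cons] at hl
      rw [List.map_cons, List.count_cons, ih hl.2, List.toFinset_cons]
      by_cases hva : ℓ v = a
      · rw [if_pos (by simpa using hva), Finset.filter_insert, if_pos hva,
          Finset.card_insert_of_notMem (fun hmem => hl.1 (List.mem_toFinset.1
            (Finset.mem_of_mem_filter v hmem)))]
      · rw [if_neg (by simpa using hva), Finset.filter_insert,
          if_neg hva, add_zero]

theorem prod_ofFn_update_zero {M : Type*} [Monoid M] {n : ℕ} (f : Fin (n+1) → M) (x : M) :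
    (List.ofFn (Function.update f 0 (x * f 0))).prod = x * (List.ofFn f).prod := by
  have he : (fun i : Fin n => Function.update f 0 (x * f 0) i.succ)
      = fun i : Fin n => f i.succ :=
    funext fun i => Function.update_of_ne (Fin.succ_ne_zero i) _ f
  rw [List.ofFn_succ, List.ofFn_succ (f := f), List.prod_cons, List.prod_cons,
    Function.update_self, he, mul_assoc]

theorem prod_ofFn_update_last {M : Type*} [Monoid M] {n : ℕ} (f : Fin (n+1) → M) (x : M) :
    (List.ofFn (Function.update f (Fin.last n) (f (Fin.last n) * x))).prod
      = (List.ofFn f).prod * x := by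
  have he : (fun i : Fin n => Function.update f (Fin.last n) (f (Fin.last n) * x) i.castSucc)
      = fun i : Fin n => f i.castSucc :=
    funext fun i => Function.update_of_ne (Fin.castSucc_lt_last i).ne _ f
  rw [List.ofFn_succ', List.ofFn_succ' (f := f), List.concat_eq_append, List.concat_eq_append,
    List.prod_append, List.prod_append, Function.update_self, he]
  simp [mul_assoc]

end Lists2
end CTS
namespace CTS
section Lists3

theorem flatten_ofFn_update_zero {V : Type} {n : ℕ} (f : Fin (n+1) → List V) (x : List V) :
    (List.ofFn (Function.update f 0 (x ++ f 0))).flatten = x ++ (List.ofFn f).flatten := by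
  have he : (fun i : Fin n => Function.update f 0 (x ++ f 0) i.succ)
      = fun i : Fin n => f i.succ :=
    funext fun i => Function.update_of_ne (Fin.succ_ne_zero i) _ f
  rw [List.ofFn_succ, List.ofFn_succ (f := f), List.flatten_cons, List.flatten_cons,
    Function.update_self, he, List.append_assoc]

theorem flatten_ofFn_update_last {V : Type} {n : ℕ} (f : Fin (n+1) → List V) (x : List V) :
    (List.ofFn (Function.update f (Fin.last n) (f (Fin.last n) ++ x))).flatten
      = (List.ofFn f).flatten ++ x := by
  have he : (fun i : Fin n => Function.update f (Fin.last n) (f (Fin.last n) ++ x) i.castSucc)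
      = fun i : Fin n => f i.castSucc :=
    funext fun i => Function.update_of_ne (Fin.castSucc_lt_last i).ne _ f
  rw [List.ofFn_succ', List.ofFn_succ' (f := f), List.concat_eq_append, List.concat_eq_append,
    List.flatten_append, List.flatten_append, Function.update_self, he]
  simp [List.append_assoc]

end Lists3
end CTS

namespace CTS

/-- A topological sort of the finite partial order `V`: a duplicate-free list containing
every element, such that whenever `u < v`, `u` occurs before `v`. -/
def IsTopSort {V : Type*} [PartialOrder V] (σ : List V) : Prop :=
  σ.Nodup ∧ (∀ v : V, v ∈ σ) ∧ σ.Pairwise (fun u v => ¬ v < u)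

/-- antichain lemma: for a surjective morphism `μ : A^* → H` onto a finite
group, for every `k > 0` there is `n_k` such that any finite `A`-labeled DAG with an
`n_k`-rich antichain whose Parikh image is that of some word mapping to `g₁ ⋯ g_k` admits
a topological sort splitting as `σ₁ ⋯ σ_k` with `μ` of the word achieved by `σᵢ` equal
to `gᵢ`. -/
theorem stmt19 {A : Type} [Fintype A] [DecidableEq A] {H : Type} [Group H] [Fintype H]
    (μ : List A → H) (hone : μ [] = 1)
    (hmul : ∀ u v : List A, μ (u ++ v) = μ u * μ v)
    (hsurj : Function.Surjective μ) :
    ∀ k : ℕ, 0 < k → ∃ nk : ℕ,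
      ∀ (V : Type) [Fintype V] [PartialOrder V] (ℓ : V → A),
        (∃ C : Finset V, IsAntichain (· ≤ ·) (C : Set V) ∧
          ∀ a : A, nk ≤ (C.filter fun v => ℓ v = a).card) →
        ∀ g : Fin k → H,
          (∃ w : List A, μ w = (List.ofFn g).prod ∧
            ∀ a : A, w.count a = (Finset.univ.filter fun v : V => ℓ v = a).card) →
          ∃ σs : Fin k → List V,
            IsTopSort (List.ofFn σs).flatten ∧ ∀ i, μ ((σs i).map ℓ) = g i := by
  intro k hk
  classical
  haveI hNorm := SG_normal μ hone hmul hsurj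
  obtain ⟨N0, hN0⟩ := single_target μ hone hmul
  obtain ⟨j, rfl⟩ : ∃ j, k = j + 1 := ⟨k - 1, by omega⟩
  set m : ℕ := Fintype.card H with hmdef
  have hm : 0 < m := Fintype.card_pos
  set B : ℕ := m * (N0 + 1) with hBdef
  refine ⟨j * B + N0, ?_⟩
  rintro V _ _ ℓ ⟨C, hCanti, hCrich⟩ g ⟨w, hw, hwcount⟩
  -- linear extension of the partial order
  obtain ⟨s, hslin, hsub⟩ := extend_partialOrder ((· ≤ ·) : V → V → Prop)
  haveI := hslin
  haveI : DecidableRel s := Classical.decRel s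
  have sortFacts : ∀ F : Finset V, ∃ l : List V, l.Nodup ∧ (∀ x, x ∈ l ↔ x ∈ F) ∧
      l.toFinset = F ∧ l.Pairwise (fun u v => ¬ v < u) := by
    intro F
    have hperm := List.perm_insertionSort s F.toList
    refine ⟨List.insertionSort s F.toList, (hperm.nodup_iff).2 F.nodup_toList,
      fun x => (hperm.mem_iff).trans (Finset.mem_toList), ?_, ?_⟩
    · rw [List.toFinset_eq_of_perm _ _ hperm, Finset.toList_toFinset]
    · refine (List.pairwise_insertionSort s F.toList).imp ?_
      intro a b hab hba
      have h1 : s b a := hsub b a (le_of_lt hba)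
      have : a = b := antisymm hab h1
      subst this
      exact lt_irrefl a hba
  -- the partition D / C / U
  set Uset : Finset V := Finset.univ.filter (fun x => ∃ c ∈ C, c < x) with hUdef
  set Dset : Finset V := Finset.univ.filter (fun x => x ∉ C ∧ ¬ ∃ c ∈ C, c < x) with hDdef
  have memU : ∀ x, x ∈ Uset ↔ ∃ c ∈ C, c < x := by intro x; simp [hUdef]
  have memD : ∀ x, x ∈ Dset ↔ (x ∉ C ∧ ¬ ∃ c ∈ C, c < x) := by intro x; simp [hDdef]
  have hCU : ∀ x, x ∈ C → x ∉ Uset := by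
    intro x hx hmem
    obtain ⟨c, hc, hcx⟩ := (memU x).1 hmem
    exact hCanti (Finset.mem_coe.2 hc) (Finset.mem_coe.2 hx) (ne_of_lt hcx) (le_of_lt hcx)
  have hDC : ∀ x, x ∈ Dset → x ∉ C := fun x hx => ((memD x).1 hx).1
  have hDU : ∀ x, x ∈ Dset → x ∉ Uset := fun x hx hu => ((memD x).1 hx).2 ((memU x).1 hu)
  have hcover : ∀ x : V, x ∈ Dset ∨ x ∈ C ∨ x ∈ Uset := by
    intro x
    by_cases h1 : x ∈ C
    · exact Or.inr (Or.inl h1)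
    by_cases h2 : ∃ c ∈ C, c < x
    · exact Or.inr (Or.inr ((memU x).2 h2))
    · exact Or.inl ((memD x).2 ⟨h1, h2⟩)
  obtain ⟨dl, hdlnd, hdlmem, hdlfs, hdlpw⟩ := sortFacts Dset
  obtain ⟨ul, hulnd, hulmem, hulfs, hulpw⟩ := sortFacts Uset
  -- targets
  set x : H := μ (dl.map ℓ) with hxdef
  set y : H := μ (ul.map ℓ) with hydef
  set g1 : Fin (j+1) → H := Function.update g (Fin.last j) (g (Fin.last j) * y⁻¹) with hg1def
  set tg : Fin (j+1) → H := Function.update g1 0 (x⁻¹ * g1 0) with htgdef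
  -- counts
  set totalC : A → ℕ := fun a => (C.filter fun v => ℓ v = a).card with htotdef
  choose d hd1 hd2 using fun i : Fin (j+1) => class_real μ hone hmul hsurj (tg i)
  set c : Fin (j+1) → A → ℕ := fun i a =>
    if i = Fin.last j then
      totalC a - (∑ i' ∈ Finset.univ.erase (Fin.last j), (d i' a + m * N0))
    else d i a + m * N0 with hcdef
  have hsum_small : ∀ a, (∑ i' ∈ Finset.univ.erase (Fin.last j), (d i' a + m * N0)) + N0
      ≤ totalC a := by
    intro a
    have h1 : (∑ i' ∈ Finset.univ.erase (Fin.last j), (d i' a + m * N0)) ≤ j * B := by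
      calc (∑ i' ∈ Finset.univ.erase (Fin.last j), (d i' a + m * N0))
          ≤ ∑ _i' ∈ Finset.univ.erase (Fin.last j), B := by
            apply Finset.sum_le_sum
            intro i _
            have := hd1 i a
            rw [hBdef]
            have hmN : m * (N0 + 1) = m + m * N0 := by ring
            omega
        _ = j * B := by
            rw [Finset.sum_const, Finset.card_erase_of_mem (Finset.mem_univ _)]
            simp [mul_comm]
    have h2 := hCrich a
    exact le_trans (Nat.add_le_add_right h1 N0) h2
  have hcsum : ∀ a, (∑ i, c i a) = totalC a := by
    intro a
    rw [← Finset.add_sum_erase _ _ (Finset.mem_univ (Fin.last j))]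
    have he : ∀ i' ∈ Finset.univ.erase (Fin.last j), c i' a = d i' a + m * N0 := by
      intro i' hi'
      simp only [hcdef, if_neg (Finset.mem_erase.1 hi').1]
    rw [Finset.sum_congr rfl he]
    have h1 := hsum_small a
    simp only [hcdef, if_pos]
    set S := ∑ i' ∈ Finset.univ.erase (Fin.last j), (d i' a + m * N0) with hS
    omega
  have hclarge : ∀ (i : Fin (j+1)) (a : A), N0 ≤ c i a := by
    intro i a
    simp only [hcdef]
    by_cases hi : i = Fin.last j
    · rw [if_pos hi]
      have h1 := hsum_small a
      set S := ∑ i' ∈ Finset.univ.erase (Fin.last j), (d i' a + m * N0) with hS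
      omega
    · rw [if_neg hi]
      have hN0m : N0 ≤ m * N0 := Nat.le_mul_of_pos_left N0 hm
      set T := m * N0 with hT
      omega
  -- commutative group structure on the quotient
  letI : CommGroup (H ⧸ SG μ hone hmul) :=
    { (inferInstance : Group (H ⧸ SG μ hone hmul)) with
      mul_comm := quot_comm μ hone hmul hsurj }
  have hmid : ∀ i : Fin (j+1), i ≠ Fin.last j →
      ((μ (canon (c i)) : H) : H ⧸ SG μ hone hmul) = ((tg i : H) : H ⧸ SG μ hone hmul) := by
    intro i hi
    have he : c i = fun a => d i a + m * N0 := by funext a; simp only [hcdef, if_neg hi]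
    have he2 : μ (canon (c i)) = μ (canon (d i)) := by
      rw [he]
      apply mu_canon_mod μ hone hmul
      intro a
      show (d i a + m * N0) % Fintype.card H = d i a % Fintype.card H
      rw [← hmdef]
      exact Nat.add_mul_mod_self_left _ _ _
    rw [he2]
    exact hd2 i
  have hclass : ∀ i : Fin (j+1),
      ((μ (canon (c i)) : H) : H ⧸ SG μ hone hmul) = ((tg i : H) : H ⧸ SG μ hone hmul) := by
    intro i
    by_cases hi : i = Fin.last j
    · subst hi
      have t1 : ((μ w : H) : H ⧸ SG μ hone hmul)
          = ((μ (canon (fun a => (Finset.univ.filter fun v : V => ℓ v = a).card)) : H) :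
              H ⧸ SG μ hone hmul) := by
        apply pi_count μ hone hmul hsurj
        intro a; rw [count_canon, hwcount a]
      have hsplit : ∀ a : A, (Finset.univ.filter fun v : V => ℓ v = a).card
          = (Dset.filter fun v => ℓ v = a).card
            + (totalC a + (Uset.filter fun v => ℓ v = a).card) := by
        intro a
        have huniv : (Finset.univ : Finset V) = Dset ∪ (C ∪ Uset) := by
          ext v
          simp only [Finset.mem_union, Finset.mem_univ, true_iff]
          rcases hcover v with h | h | h
          exacts [Or.inl h, Or.inr (Or.inl h), Or.inr (Or.inr h)]
        have hdis1 : Disjoint Dset (C ∪ Uset) := by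
          rw [Finset.disjoint_left]
          intro v hv hv2
          rcases Finset.mem_union.1 hv2 with h | h
          exacts [hDC v hv h, hDU v hv h]
        have hdis2 : Disjoint C Uset := by
          rw [Finset.disjoint_left]
          intro v hv hv2
          exact hCU v hv hv2
        rw [huniv, Finset.filter_union,
          Finset.card_union_of_disjoint (Finset.disjoint_filter_filter hdis1),
          Finset.filter_union,
          Finset.card_union_of_disjoint (Finset.disjoint_filter_filter hdis2)]
      have t2 : ((μ (canon (fun a => (Finset.univ.filter fun v : V => ℓ v = a).card)) : H) :
            H ⧸ SG μ hone hmul)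
          = ((x : H) : H ⧸ SG μ hone hmul)
            * (((μ (canon totalC) : H) : H ⧸ SG μ hone hmul)
              * ((y : H) : H ⧸ SG μ hone hmul)) := by
        have e : (fun a => (Finset.univ.filter fun v : V => ℓ v = a).card)
            = fun a => (Dset.filter fun v => ℓ v = a).card
              + (totalC a + (Uset.filter fun v => ℓ v = a).card) := funext hsplit
        rw [e, pi_canon_add μ hone hmul hsurj, pi_canon_add μ hone hmul hsurj]
        have e2 : ((μ (canon (fun a => (Dset.filter fun v => ℓ v = a).card)) : H) :
            H ⧸ SG μ hone hmul) = ((x : H) : H ⧸ SG μ hone hmul) := by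
          apply pi_count μ hone hmul hsurj
          intro a
          rw [count_canon, count_map_label ℓ dl hdlnd a, hdlfs]
        have e3 : ((μ (canon (fun a => (Uset.filter fun v => ℓ v = a).card)) : H) :
            H ⧸ SG μ hone hmul) = ((y : H) : H ⧸ SG μ hone hmul) := by
          apply pi_count μ hone hmul hsurj
          intro a
          rw [count_canon, count_map_label ℓ ul hulnd a, hulfs]
        rw [e2, e3]
      have t3 : ((μ (canon totalC) : H) : H ⧸ SG μ hone hmul)
          = ∏ i : Fin (j+1), ((μ (canon (c i)) : H) : H ⧸ SG μ hone hmul) := by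
        have hs := pi_canon_sum μ hone hmul hsurj (List.ofFn c)
        have e1 : (fun a => ((List.ofFn c).map (fun ci => ci a)).sum) = totalC := by
          funext a
          rw [List.map_ofFn]
          show (List.ofFn fun i => c i a).sum = totalC a
          rw [List.sum_ofFn]
          exact hcsum a
        rw [e1] at hs
        rw [hs, List.map_ofFn, List.prod_ofFn]
        exact Finset.prod_congr rfl fun i _ => rfl
      have t4 : (((List.ofFn tg).prod : H) : H ⧸ SG μ hone hmul)
          = ∏ i : Fin (j+1), ((tg i : H) : H ⧸ SG μ hone hmul) := by
        have := (QuotientGroup.mk' (SG μ hone hmul)).map_list_prod (List.ofFn tg)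
        simp only [QuotientGroup.mk'_apply, List.map_ofFn] at this
        rw [this, List.prod_ofFn]
        exact Finset.prod_congr rfl fun i _ => rfl
      have t5 : (List.ofFn tg).prod = x⁻¹ * ((List.ofFn g).prod * y⁻¹) := by
        rw [htgdef, prod_ofFn_update_zero, hg1def, prod_ofFn_update_last]
      have main : (∏ i : Fin (j+1), ((tg i : H) : H ⧸ SG μ hone hmul))
          = ∏ i : Fin (j+1), ((μ (canon (c i)) : H) : H ⧸ SG μ hone hmul) := by
        rw [← t4, t5, ← t3]
        rw [QuotientGroup.mk_mul, QuotientGroup.mk_mul, ← hw]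
        rw [t1, t2]
        rw [QuotientGroup.mk_inv, QuotientGroup.mk_inv]
        have hc1 : ∀ q r t : H ⧸ SG μ hone hmul, q⁻¹ * (q * (t * r) * r⁻¹) = t := by
          intro q r t
          group
        exact hc1 _ _ _
      rw [← Finset.mul_prod_erase Finset.univ _ (Finset.mem_univ (Fin.last j)),
          ← Finset.mul_prod_erase Finset.univ _ (Finset.mem_univ (Fin.last j))] at main
      have hr : (∏ i ∈ Finset.univ.erase (Fin.last j), ((tg i : H) : H ⧸ SG μ hone hmul))
          = ∏ i ∈ Finset.univ.erase (Fin.last j),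
              ((μ (canon (c i)) : H) : H ⧸ SG μ hone hmul) :=
        Finset.prod_congr rfl (fun i hi => (hmid i (Finset.mem_erase.1 hi).1).symm)
      rw [hr] at main
      exact (mul_right_cancel main).symm
    · exact hmid i hi
  -- realize each target with a word of prescribed counts
  choose u hu1 hu2 using fun i : Fin (j+1) => hN0 (c i) (tg i) (hclarge i) (hclass i)
  have hcount_flat : ∀ a, ((List.ofFn u).flatten).count a = (C.filter fun v => ℓ v = a).card := by
    intro a
    rw [List.count_flatten, List.map_ofFn, List.sum_ofFn]
    have he : ∀ i ∈ (Finset.univ : Finset (Fin (j+1))), (List.count a ∘ u) i = c i a :=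
      fun i _ => hu2 i a
    rw [Finset.sum_congr rfl he, hcsum a]
  obtain ⟨L, hLnd, hLfs, hLmap⟩ := order_vertices ℓ ((List.ofFn u).flatten) C hcount_flat
  obtain ⟨Ls, hLs1, hLs2⟩ := split_list ℓ (List.ofFn u) L hLmap
  have hLslen : Ls.length = j + 1 := by
    have := congrArg List.length hLs2
    simpa using this
  set P : Fin (j+1) → List V := fun i => Ls.getD i [] with hPdef
  have hofFnP : List.ofFn P = Ls := by
    apply List.ext_getElem (by simp [hLslen])
    intro n h1 h2
    simp only [List.getElem_ofFn, hPdef]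
    exact (List.getD_eq_getElem Ls [] h2).symm ▸ rfl
  have hPmap : ∀ i : Fin (j+1), (P i).map ℓ = u i := by
    intro i
    have hilt : (i : ℕ) < Ls.length := by rw [hLslen]; exact i.isLt
    have hilt2 : (i : ℕ) < (Ls.map (fun l => l.map ℓ)).length := by
      rw [List.length_map]; exact hilt
    have hilt3 : (i : ℕ) < (List.ofFn u).length := by rw [List.length_ofFn]; exact i.isLt
    have h1 : (Ls.map (fun l => l.map ℓ))[(i:ℕ)]'hilt2 = (List.ofFn u)[(i:ℕ)]'hilt3 := by
      simp only [hLs2]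
    rw [List.getElem_map, List.getElem_ofFn] at h1
    have h2 : P i = Ls[(i:ℕ)]'hilt := by
      simp only [hPdef]
      exact List.getD_eq_getElem Ls [] hilt
    rw [h2, h1]
  set P1 : Fin (j+1) → List V := Function.update P (Fin.last j) (P (Fin.last j) ++ ul) with hP1def
  set σs : Fin (j+1) → List V := Function.update P1 0 (dl ++ P1 0) with hσdef
  have hflat : (List.ofFn σs).flatten = dl ++ (L ++ ul) := by
    rw [hσdef, flatten_ofFn_update_zero, hP1def, flatten_ofFn_update_last, hofFnP, hLs1]
  have hLmem : ∀ v, v ∈ L ↔ v ∈ C := fun v => by rw [← hLfs, List.mem_toFinset]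
  refine ⟨σs, ?_, ?_⟩
  · rw [hflat]
    refine ⟨?_, ?_, ?_⟩
    · refine List.nodup_append.2 ⟨hdlnd, List.nodup_append.2 ⟨hLnd, hulnd, ?_⟩, ?_⟩
      · intro v hv v' hv2 hvv
        subst hvv
        exact hCU v ((hLmem v).1 hv) ((hulmem v).1 hv2)
      · intro v hv v' hv2 hvv
        subst hvv
        have hvD := (hdlmem v).1 hv
        rcases List.mem_append.1 hv2 with h | h
        · exact hDC v hvD ((hLmem v).1 h)
        · exact hDU v hvD ((hulmem v).1 h)
    · intro v
      rcases hcover v with h | h | h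
      · exact List.mem_append.2 (Or.inl ((hdlmem v).2 h))
      · exact List.mem_append.2 (Or.inr (List.mem_append.2 (Or.inl ((hLmem v).2 h))))
      · exact List.mem_append.2 (Or.inr (List.mem_append.2 (Or.inr ((hulmem v).2 h))))
    · refine List.pairwise_append.2 ⟨hdlpw, List.pairwise_append.2 ⟨?_, hulpw, ?_⟩, ?_⟩
      · refine hLnd.imp_of_mem ?_
        intro a b ha hb _ hba
        exact hCanti (Finset.mem_coe.2 ((hLmem b).1 hb)) (Finset.mem_coe.2 ((hLmem a).1 ha))
          (ne_of_lt hba) (le_of_lt hba)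
      · intro a ha b hb hba
        obtain ⟨c', hc', hc'b⟩ := (memU b).1 ((hulmem b).1 hb)
        have hc'a : c' < a := lt_trans hc'b hba
        exact hCanti (Finset.mem_coe.2 hc') (Finset.mem_coe.2 ((hLmem a).1 ha))
          (ne_of_lt hc'a) (le_of_lt hc'a)
      · intro a ha b hb hba
        have haD := (hdlmem a).1 ha
        rcases List.mem_append.1 hb with h | h
        · exact ((memD a).1 haD).2 ⟨b, (hLmem b).1 h, hba⟩
        · obtain ⟨c', hc', hc'b⟩ := (memU b).1 ((hulmem b).1 h)
          exact ((memD a).1 haD).2 ⟨c', hc', lt_trans hc'b hba⟩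
  · intro i
    by_cases hi0 : i = 0
    · subst hi0
      have hσ0 : σs 0 = dl ++ P1 0 := by rw [hσdef]; exact Function.update_self _ _ _
      by_cases hl0 : (0 : Fin (j+1)) = Fin.last j
      · have hP10 : P1 0 = P 0 ++ ul := by
          rw [hP1def, hl0, Function.update_self, ← hl0]
        rw [hσ0, hP10, List.map_append, hmul, List.map_append, hmul, hPmap, hu1]
        have htg0 : tg 0 = x⁻¹ * (g 0 * y⁻¹) := by
          rw [htgdef, Function.update_self, hg1def, hl0, Function.update_self, ← hl0]
        rw [htg0, ← hxdef, ← hydef]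
        group
      · have hP10 : P1 0 = P 0 := by
          rw [hP1def]
          exact Function.update_of_ne (fun h => hl0 h) _ _
        rw [hσ0, hP10, List.map_append, hmul, hPmap, hu1]
        have htg0 : tg 0 = x⁻¹ * g 0 := by
          rw [htgdef, Function.update_self, hg1def,
            Function.update_of_ne (fun h => hl0 h) _ _]
        rw [htg0, ← hxdef]
        group
    · have hσi : σs i = P1 i := by
        rw [hσdef]
        exact Function.update_of_ne hi0 _ _
      by_cases hil : i = Fin.last j
      · subst hil
        have hP1i : P1 (Fin.last j) = P (Fin.last j) ++ ul := by
          rw [hP1def]; exact Function.update_self _ _ _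
        rw [hσi, hP1i, List.map_append, hmul, hPmap, hu1]
        have htgi : tg (Fin.last j) = g (Fin.last j) * y⁻¹ := by
          rw [htgdef, Function.update_of_ne hi0, hg1def, Function.update_self]
        rw [htgi, ← hydef]
        group
      · have hP1i : P1 i = P i := by
          rw [hP1def]; exact Function.update_of_ne hil _ _
        rw [hσi, hP1i, hPmap, hu1]
        rw [htgdef, Function.update_of_ne hi0, hg1def, Function.update_of_ne hil]

end CTS
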